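/- In the measure setting, let K be an intermediate field with E ⊆ K ⊆ L and K ∩ k_L = k, and let F ∈ 𝒮(L/K). Then μ¹_{L/F}({F}) = 1 if and only if F is maximal with respect to inclusion in 𝒮(L/K). (In the Markov chain on 𝒮(L/K) with transition probability from F to F′ given by μ¹_{L/F}({F′}), this says that F is absorbing if and only if F is maximal.) -/

import Mathlib

open IntermediateField

section MeasureSetting

variable (k E L : Type) [Field k] [Field E] [Field L]
  [Algebra k E] [Algebra E L] [Algebra k L] [IsScalarTower k E L]

/-- `E` is regular over `k`: every element of `E` algebraic over `k` lies in `k`. -/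
def IsRegularExtension (k E : Type*) [Field k] [Field E] [Algebra k E] : Prop :=
  ∀ x : E, IsAlgebraic k x → x ∈ (algebraMap k E).range

/-- `𝒮(L/K)`: the set of intermediate fields `F` with `K ⊆ F ⊆ L` and `F ∩ k_L = k`,
where `k_L` is the relative separable closure of `k` in `L`. -/
def SS (K : IntermediateField E L) : Set (IntermediateField E L) :=
  {F | K ≤ F ∧ F.restrictScalars k ⊓ separableClosure k L = ⊥}

variable (n : ℕ)

/-- The automorphism `σ ∈ Gal(L/K)` restricts to `ρ ∈ Gal(k_L/k)` on `k_L`. -/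
def RestrictsTo (K : IntermediateField E L) (σ : L ≃ₐ[K] L)
    (ρ : ↥(separableClosure k L) ≃ₐ[k] ↥(separableClosure k L)) : Prop :=
  ∀ x : ↥(separableClosure k L), σ (x : L) = ((ρ x : L))

/-- `σ̄` is a lift of `ρ̄` to `Gal(L/K)`. -/
def IsLift (K : IntermediateField E L)
    (ρ : Fin n → (↥(separableClosure k L) ≃ₐ[k] ↥(separableClosure k L)))
    (σ : Fin n → (L ≃ₐ[K] L)) : Prop :=
  ∀ i, RestrictsTo k E L K (σ i) (ρ i)

/-- The fixed field in `L` of the subgroup generated by `σ₁, …, σₙ ∈ Gal(L/K)`,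
viewed as an intermediate field of `L/E`. -/
def FixT (K : IntermediateField E L) (σ : Fin n → (L ≃ₐ[K] L)) : IntermediateField E L :=
  (IntermediateField.fixedField (Subgroup.closure (Set.range σ))).restrictScalars E

/-- The compositum `K·k_L`, as an intermediate field of `L/K`. -/
def compKL (K : IntermediateField E L) : IntermediateField K L :=
  IntermediateField.adjoin K ((separableClosure k L : IntermediateField k L) : Set L)

/-- `μ¹_{L/K}(X)` computed from a chosen lift `σ'` of `ρ̄`:
`|{τ̄ ∈ Gal(L/K·k_L)ⁿ : Fix(σ'₁τ₁,…,σ'ₙτₙ) ∈ X}| / [L : K·k_L]ⁿ`, where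
`Gal(L/K·k_L)` is the subgroup of `Gal(L/K)` fixing `k_L` (equivalently `K·k_L`)
pointwise. -/
noncomputable def mu1Lift (K : IntermediateField E L) (σ' : Fin n → (L ≃ₐ[K] L))
    (X : Set (IntermediateField E L)) : ℚ :=
  (Nat.card {τ : Fin n → ↥((compKL k E L K).fixingSubgroup) //
      FixT E L n K (fun i => σ' i * ((τ i : L ≃ₐ[K] L))) ∈ X} : ℚ) /
    ((Module.finrank ↥(compKL k E L K) L : ℚ)) ^ n

/-- `μ¹_{L/K}(X)`, in lift-free form: the set of tuples `σ̄'τ̄` with `σ̄'` a fixed lift of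
`ρ̄` and `τ̄ ∈ Gal(L/K·k_L)ⁿ` is exactly the set of tuples `ᾱ ∈ Gal(L/K)ⁿ` lifting `ρ̄`,
so `μ¹_{L/K}(X) = |{ᾱ ∈ Gal(L/K)ⁿ : ᾱ lifts ρ̄ and Fix(ᾱ) ∈ X}| / [L : K·k_L]ⁿ`. -/
noncomputable def mu1 (ρ : Fin n → (↥(separableClosure k L) ≃ₐ[k] ↥(separableClosure k L)))
    (K : IntermediateField E L) (X : Set (IntermediateField E L)) : ℚ :=
  (Nat.card {α : Fin n → (L ≃ₐ[K] L) //
      IsLift k E L n K ρ α ∧ FixT E L n K α ∈ X} : ℚ) /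
    ((Module.finrank ↥(compKL k E L K) L : ℚ)) ^ n

/-- The iterated measures `μⁱ_{L/K}` on singletons: `μ⁰_{L/K}` is the point mass at `K`,
and `μ^{i+1}_{L/K}({F}) = Σ_{F' ∈ 𝒮(L/K)} μⁱ_{L/K}({F'})·μ¹_{L/F'}({F})`. -/
noncomputable def muI (ρ : Fin n → (↥(separableClosure k L) ≃ₐ[k] ↥(separableClosure k L)))
    (K : IntermediateField E L) : ℕ → IntermediateField E L → ℚ
  | 0, F => ({K} : Set (IntermediateField E L)).indicator 1 F
  | (i+1), F => ∑ᶠ F' ∈ SS k E L K, muI ρ K i F' * mu1 k E L n ρ F' {F}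

end MeasureSetting

set_option linter.unusedSectionVars false

section Aux10

variable (k E L : Type) [Field k] [Field E] [Field L]
  [Algebra k E] [Algebra E L] [Algebra k L] [IsScalarTower k E L]

instance aux10Tower (F : IntermediateField E L) : IsScalarTower k ↥F L :=
  IsScalarTower.of_algebraMap_eq' rfl

variable [IsGalois k ↥(separableClosure k L)]

/-- Restriction homomorphism `Gal(L/F) →* Gal(k_L/k)`. -/
noncomputable def resHom (F : IntermediateField E L) :
    (L ≃ₐ[↥F] L) →* (↥(separableClosure k L) ≃ₐ[k] ↥(separableClosure k L)) :=
  (AlgEquiv.restrictNormalHom ↥(separableClosure k L)).comp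
    (MonoidHom.mk' (fun σ : L ≃ₐ[↥F] L => σ.restrictScalars k) fun _ _ => rfl)

lemma resHom_apply (F : IntermediateField E L) (σ : L ≃ₐ[↥F] L)
    (x : ↥(separableClosure k L)) :
    ((resHom k E L F σ) x : L) = σ (x : L) :=
  AlgEquiv.restrictNormal_commutes (σ.restrictScalars k) _ x

lemma restrictsTo_iff (F : IntermediateField E L) (σ : L ≃ₐ[↥F] L)
    (ρ : ↥(separableClosure k L) ≃ₐ[k] ↥(separableClosure k L)) :
    RestrictsTo k E L F σ ρ ↔ resHom k E L F σ = ρ := by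
  constructor
  · intro h
    ext x
    exact (resHom_apply k E L F σ x).trans (h x)
  · intro h x
    rw [← h]
    exact (resHom_apply k E L F σ x).symm

lemma fixed_in_bot [FiniteDimensional E L] [IsGalois E L] (F : IntermediateField E L)
    (hF : F.restrictScalars k ⊓ separableClosure k L = ⊥) (x : L)
    (hx : x ∈ separableClosure k L) (h : ∀ σ : L ≃ₐ[↥F] L, σ x = x) :
    x ∈ (⊥ : IntermediateField k L) := by
  have h1 : x ∈ IntermediateField.fixedField (⊤ : Subgroup (L ≃ₐ[↥F] L)) :=
    fun g => h g.1
  rw [← IntermediateField.fixingSubgroup_bot (F := ↥F) (E := L),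
    IsGalois.fixedField_fixingSubgroup] at h1
  obtain ⟨f, hf⟩ := IntermediateField.mem_bot.mp h1
  have hxF : x ∈ F.restrictScalars k := by
    rw [IntermediateField.mem_restrictScalars]
    exact hf ▸ f.2
  have : x ∈ F.restrictScalars k ⊓ separableClosure k L := ⟨hxF, hx⟩
  rwa [hF] at this

lemma fixedPoints_resHom [FiniteDimensional E L] [IsGalois E L] (F : IntermediateField E L)
    (hF : F.restrictScalars k ⊓ separableClosure k L = ⊥) (y : ↥(separableClosure k L))
    (hy : ∀ σ : L ≃ₐ[↥F] L, resHom k E L F σ y = y) :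
    ∃ c : k, algebraMap k ↥(separableClosure k L) c = y := by
  have h : ∀ σ : L ≃ₐ[↥F] L, σ (y : L) = y := by
    intro σ
    rw [← resHom_apply k E L F σ y, hy σ]
  obtain ⟨c, hc⟩ := IntermediateField.mem_bot.mp (fixed_in_bot k E L F hF y y.2 h)
  refine ⟨c, Subtype.ext ?_⟩
  rw [← hc]
  exact (IsScalarTower.algebraMap_apply k ↥(separableClosure k L) L c).symm

lemma resHom_surjective [FiniteDimensional E L] [IsGalois E L] (F : IntermediateField E L)
    (hF : F.restrictScalars k ⊓ separableClosure k L = ⊥) :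
    Function.Surjective (resHom k E L F) := by
  set sc := ↥(separableClosure k L)
  set Γ := (resHom k E L F).range with hΓ
  have hfin : Finite Γ := Set.Finite.to_subtype (Set.finite_range _)
  have hfix : ∀ y : FixedPoints.subfield Γ sc, ∃ c : k, algebraMap k sc c = (y : sc) := by
    intro y
    refine fixedPoints_resHom k E L F hF y.1 fun σ => ?_
    exact y.2 ⟨resHom k E L F σ, ⟨σ, rfl⟩⟩
  intro ρ
  have hcomm : ∀ y : FixedPoints.subfield Γ sc, ρ (y : sc) = y := by
    intro y
    obtain ⟨c, hc⟩ := hfix y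
    rw [← hc]
    exact ρ.commutes c
  let ρ' : sc ≃ₐ[FixedPoints.subfield Γ sc] sc :=
    AlgEquiv.ofRingEquiv (f := ρ.toRingEquiv) hcomm
  obtain ⟨γ, hγ⟩ := FixedPoints.toAlgAut_surjective Γ sc ρ'
  obtain ⟨σ, hσ⟩ := γ.2
  refine ⟨σ, ?_⟩
  ext x
  have h1 := DFunLike.congr_fun hγ x
  rw [hσ]
  exact congrArg Subtype.val (h1 : _)

lemma mem_fixing_compKL (F : IntermediateField E L) (σ : L ≃ₐ[↥F] L) :
    σ ∈ (compKL k E L F).fixingSubgroup ↔ ∀ x ∈ separableClosure k L, σ x = x := by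
  rw [IntermediateField.mem_fixingSubgroup_iff]
  constructor
  · intro h x hx
    exact h x (IntermediateField.subset_adjoin _ _ hx)
  · intro h x hx
    have hle : compKL k E L F ≤ IntermediateField.fixedField (Subgroup.zpowers σ) := by
      rw [compKL, IntermediateField.adjoin_le_iff]
      intro y hy
      have hst : Subgroup.zpowers σ ≤ MulAction.stabilizer (L ≃ₐ[↥F] L) y :=
        Subgroup.zpowers_le.mpr (h y hy)
      exact fun g => hst g.2
    exact hle hx ⟨σ, Subgroup.mem_zpowers σ⟩

lemma exists_lift [FiniteDimensional E L] [IsGalois E L] (F : IntermediateField E L)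
    (hF : F.restrictScalars k ⊓ separableClosure k L = ⊥) (n : ℕ)
    (ρ : Fin n → (↥(separableClosure k L) ≃ₐ[k] ↥(separableClosure k L))) :
    ∃ σ' : Fin n → (L ≃ₐ[↥F] L), IsLift k E L n F ρ σ' := by
  choose σ' hσ' using fun i => resHom_surjective k E L F hF (ρ i)
  exact ⟨σ', fun i => (restrictsTo_iff k E L F (σ' i) (ρ i)).mpr (hσ' i)⟩

lemma card_lifts [FiniteDimensional E L] [IsGalois E L] (F : IntermediateField E L)
    (hF : F.restrictScalars k ⊓ separableClosure k L = ⊥) (n : ℕ)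
    (ρ : Fin n → (↥(separableClosure k L) ≃ₐ[k] ↥(separableClosure k L))) :
    Nat.card {α : Fin n → (L ≃ₐ[↥F] L) // IsLift k E L n F ρ α}
      = (Module.finrank ↥(compKL k E L F) L) ^ n := by
  obtain ⟨σ', hσ'⟩ := exists_lift k E L F hF n ρ
  have e : {α : Fin n → (L ≃ₐ[↥F] L) // IsLift k E L n F ρ α}
      ≃ (Fin n → ↥(compKL k E L F).fixingSubgroup) := by
    refine
      { toFun := fun α i => ⟨(σ' i)⁻¹ * α.1 i, ?_⟩
        invFun := fun τ => ⟨fun i => σ' i * (τ i).1, ?_⟩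
        left_inv := ?_
        right_inv := ?_ }
    · rw [mem_fixing_compKL]
      intro x hx
      have h1 : α.1 i x = σ' i x := by
        rw [show α.1 i x = ((ρ i ⟨x, hx⟩ : ↥(separableClosure k L)) : L) from α.2 i ⟨x, hx⟩,
          ← hσ' i ⟨x, hx⟩]
      rw [AlgEquiv.mul_apply, h1]
      exact (σ' i).symm_apply_apply x
    · intro i x
      rw [AlgEquiv.mul_apply, show ((τ i).1 : L ≃ₐ[↥F] L) (x : L) = x from
        (mem_fixing_compKL k E L F (τ i).1).mp (τ i).2 x x.2]
      exact hσ' i x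
    · intro α
      refine Subtype.ext (funext fun i => ?_)
      simp only [mul_inv_cancel_left]
    · intro τ
      refine funext fun i => Subtype.ext ?_
      simp only [inv_mul_cancel_left]
  rw [Nat.card_congr e, Nat.card_fun, Nat.card_eq_fintype_card (α := Fin n), Fintype.card_fin]
  congr 1
  rw [Nat.card_congr (IntermediateField.fixingSubgroupEquiv (compKL k E L F)).toEquiv,
    Nat.card_eq_fintype_card]
  exact Nat.card_eq_fintype_card.symm.trans (IsGalois.card_aut_eq_finrank _ _)

/-- View an automorphism over the larger field `F'` as one over `F`. -/
def downAut {F F' : IntermediateField E L} (h : F ≤ F') (β : L ≃ₐ[↥F'] L) :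
    L ≃ₐ[↥F] L :=
  { β.toRingEquiv with
    commutes' := fun x => β.commutes ⟨x.1, h x.2⟩ }

@[simp] lemma downAut_apply {F F' : IntermediateField E L} (h : F ≤ F')
    (β : L ≃ₐ[↥F'] L) (x : L) : downAut E L h β x = β x := rfl

/-- elements of `F'` lie in `FixT` of a family of automorphisms fixing `F'`. -/
lemma le_fixT {F F' : IntermediateField E L} (n : ℕ) (α : Fin n → (L ≃ₐ[↥F] L))
    (hfix : ∀ i, ∀ x ∈ F', α i x = x) (h : F ≤ F') : F' ≤ FixT E L n F α := by
  intro x hx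
  rw [FixT, IntermediateField.mem_restrictScalars]
  have hst : Subgroup.closure (Set.range α) ≤ MulAction.stabilizer (L ≃ₐ[↥F] L) x := by
    rw [Subgroup.closure_le]
    rintro - ⟨i, rfl⟩
    exact hfix i x hx
  exact fun g => hst g.2

lemma fixT_inf_sc [FiniteDimensional E L] [IsGalois E L] (F : IntermediateField E L)
    (hF : F.restrictScalars k ⊓ separableClosure k L = ⊥) (n : ℕ)
    (ρ : Fin n → (↥(separableClosure k L) ≃ₐ[k] ↥(separableClosure k L)))
    (hgen : Subgroup.closure (Set.range ρ) = ⊤)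
    (α : Fin n → (L ≃ₐ[↥F] L)) (hα : IsLift k E L n F ρ α) :
    (FixT E L n F α).restrictScalars k ⊓ separableClosure k L = ⊥ := by
  refine le_antisymm ?_ (le_inf bot_le bot_le)
  rintro x ⟨hx1, hx2⟩
  replace hx1 : ∀ g : Subgroup.closure (Set.range α), g.1 x = x := hx1
  -- `x` (as an element of `sc`) is fixed by every `ρ i`, hence by all of `Gal(sc/k)`.
  have hρ : ∀ i, ρ i ⟨x, hx2⟩ = ⟨x, hx2⟩ := by
    intro i
    refine Subtype.ext ?_
    have h1 : α i x = ((ρ i ⟨x, hx2⟩ : ↥(separableClosure k L)) : L) := hα i ⟨x, hx2⟩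
    have h2 : α i x = x := hx1 ⟨α i, Subgroup.subset_closure ⟨i, rfl⟩⟩
    rw [← h1, h2]
  have hall : ∀ g : ↥(separableClosure k L) ≃ₐ[k] ↥(separableClosure k L),
      g ⟨x, hx2⟩ = ⟨x, hx2⟩ := by
    intro g
    have hst : Subgroup.closure (Set.range ρ)
        ≤ MulAction.stabilizer (↥(separableClosure k L) ≃ₐ[k] ↥(separableClosure k L))
          (⟨x, hx2⟩ : ↥(separableClosure k L)) := by
      rw [Subgroup.closure_le]
      rintro - ⟨i, rfl⟩
      exact hρ i
    exact hst (hgen ▸ Subgroup.mem_top g)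
  obtain ⟨c, hc⟩ := fixedPoints_resHom k E L F hF ⟨x, hx2⟩ fun σ => hall _
  rw [IntermediateField.mem_bot]
  refine ⟨c, ?_⟩
  rw [IsScalarTower.algebraMap_apply k ↥(separableClosure k L) L c, hc]
  rfl


/-- for `F ∈ 𝒮(L/K)`, one has `μ¹_{L/F}({F}) = 1` if and only if `F` is
maximal with respect to inclusion in `𝒮(L/K)` (i.e. `F` is an absorbing state of the
associated Markov chain iff it is maximal). -/
theorem statement10
    (k E L : Type) [Field k] [Field E] [Field L] [PerfectField k]
    [Algebra k E] [Algebra E L] [Algebra k L] [IsScalarTower k E L]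
    (hreg : IsRegularExtension k E)
    [FiniteDimensional E L] [IsGalois E L]
    [IsGalois k (separableClosure k L)]
    (n : ℕ) (hn : 1 ≤ n)
    (ρ : Fin n → (↥(separableClosure k L) ≃ₐ[k] ↥(separableClosure k L)))
    (hgen : Subgroup.closure (Set.range ρ) = ⊤)
    (K : IntermediateField E L)
    (hK : K.restrictScalars k ⊓ separableClosure k L = ⊥)
    (F : IntermediateField E L) (hF : F ∈ SS k E L K) :
    mu1 k E L n ρ F {F} = 1 ↔ (∀ F' ∈ SS k E L K, F ≤ F' → F' = F) := by
  obtain ⟨hKF, hFsc⟩ := hF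
  have hcard := card_lifts k E L F hFsc n ρ
  have hd : 0 < Module.finrank ↥(compKL k E L F) L := Module.finrank_pos
  have key : mu1 k E L n ρ F {F} = 1 ↔
      ∀ α : Fin n → (L ≃ₐ[↥F] L), IsLift k E L n F ρ α → FixT E L n F α = F := by
    rw [mu1, div_eq_one_iff_eq (by positivity),
      show ((Module.finrank ↥(compKL k E L F) L : ℚ)) ^ n
        = ((Module.finrank ↥(compKL k E L F) L ^ n : ℕ) : ℚ) by push_cast; ring,
      Nat.cast_inj, ← hcard]
    have hS : Nat.card {α : Fin n → (L ≃ₐ[↥F] L) //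
        IsLift k E L n F ρ α ∧ FixT E L n F α ∈ ({F} : Set (IntermediateField E L))}
        = Set.ncard {α : Fin n → (L ≃ₐ[↥F] L) |
          IsLift k E L n F ρ α ∧ FixT E L n F α ∈ ({F} : Set (IntermediateField E L))} :=
      Nat.card_coe_set_eq _
    have hA : Nat.card {α : Fin n → (L ≃ₐ[↥F] L) // IsLift k E L n F ρ α}
        = Set.ncard {α : Fin n → (L ≃ₐ[↥F] L) | IsLift k E L n F ρ α} :=
      Nat.card_coe_set_eq _
    rw [hS, hA]
    constructor
    · intro h α hα
      have hsub : {α : Fin n → (L ≃ₐ[↥F] L) |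
          IsLift k E L n F ρ α ∧ FixT E L n F α ∈ ({F} : Set (IntermediateField E L))}
          ⊆ {α : Fin n → (L ≃ₐ[↥F] L) | IsLift k E L n F ρ α} := fun β hβ => hβ.1
      have heq := Set.eq_of_subset_of_ncard_le hsub h.ge (Set.toFinite _)
      have : α ∈ {α : Fin n → (L ≃ₐ[↥F] L) |
          IsLift k E L n F ρ α ∧ FixT E L n F α ∈ ({F} : Set (IntermediateField E L))} :=
        heq ▸ hα
      exact this.2
    · intro h
      congr 1
      ext α
      exact ⟨fun hα => hα.1, fun hα => ⟨hα, h α hα⟩⟩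
  rw [key]
  constructor
  · intro hall F' hF' hle
    obtain ⟨β, hβ⟩ := exists_lift k E L F' hF'.2 n ρ
    have hαl : IsLift k E L n F ρ (fun i => downAut E L hle (β i)) := fun i x => hβ i x
    have h1 : F' ≤ FixT E L n F (fun i => downAut E L hle (β i)) :=
      le_fixT E L n _ (fun i x hx => (β i).commutes ⟨x, hx⟩) hle
    have h2 := hall _ hαl
    exact le_antisymm (h2 ▸ h1) hle
  · intro hmax α hα
    have h1 : F ≤ FixT E L n F α :=
      le_fixT E L n α (fun i x hx => (α i).commutes ⟨x, hx⟩) le_rfl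
    exact hmax _ ⟨hKF.trans h1, fixT_inf_sc k E L F hFsc n ρ hgen α hα⟩ h1
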